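/- For every δ > 0 the function Ψ_δ is strictly convex on (γ_δ, ∞). -/

import Mathlib

open Real MeasureTheory Set intervalIntegral Filter Topology

noncomputable def stmt9ff : ℝ → ℝ := fun u => 1 / (u * Real.exp u)

lemma stmt9ff_contOn : ContinuousOn stmt9ff (Set.Ioi 0) := by
  intro u hu
  have hu : (0:ℝ) < u := hu
  have : u * Real.exp u ≠ 0 := by positivity
  exact (continuousAt_const.div ((continuous_id.mul Real.continuous_exp).continuousAt) this).continuousWithinAt

lemma stmt9ff_contAt {u : ℝ} (hu : 0 < u) : ContinuousAt stmt9ff u := by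
  have : u * Real.exp u ≠ 0 := by positivity
  exact continuousAt_const.div ((continuous_id.mul Real.continuous_exp).continuousAt) this

lemma stmt9ff_pos {u : ℝ} (hu : 0 < u) : 0 < stmt9ff u := by
  unfold stmt9ff; positivity

lemma stmt9ff_intOn {x : ℝ} (hx : 0 < x) : IntegrableOn stmt9ff (Set.Ioi x) := by
  have hmeas : AEStronglyMeasurable stmt9ff (volume.restrict (Set.Ioi x)) :=
    (stmt9ff_contOn.mono (Set.Ioi_subset_Ioi hx.le)).aestronglyMeasurable measurableSet_Ioi
  have hint : IntegrableOn (fun u : ℝ => x⁻¹ * Real.exp (-1 * u)) (Set.Ioi x) :=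
    (exp_neg_integrableOn_Ioi x one_pos).const_mul _
  refine hint.integrable.mono hmeas ?_
  filter_upwards [ae_restrict_mem measurableSet_Ioi] with u hu
  have hu0 : 0 < u := hx.trans hu
  rw [Real.norm_eq_abs, Real.norm_eq_abs, abs_of_pos (stmt9ff_pos hu0), abs_of_pos (by positivity)]
  unfold stmt9ff
  rw [one_div, neg_one_mul, Real.exp_neg, mul_inv]
  gcongr
  exact hu.le

lemma stmt9phi_sub (φ : ℝ → ℝ)
    (hφ : ∀ x : ℝ, φ x = ∫ u in Set.Ioi x, 1 / (u * Real.exp u))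
    {x y : ℝ} (hx : 0 < x) (hxy : x ≤ y) :
    φ x - φ y = ∫ u in x..y, stmt9ff u := by
  have hsplit : (∫ u in Set.Ioi x, stmt9ff u)
      = (∫ u in Set.Ioc x y, stmt9ff u) + ∫ u in Set.Ioi y, stmt9ff u := by
    rw [← MeasureTheory.setIntegral_union (Set.Ioc_disjoint_Ioi le_rfl) measurableSet_Ioi
      ((stmt9ff_intOn hx).mono_set Set.Ioc_subset_Ioi_self) (stmt9ff_intOn (hx.trans_le hxy)),
      Set.Ioc_union_Ioi_eq_Ioi hxy]
  have h1 : φ x = ∫ u in Set.Ioi x, stmt9ff u := hφ x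
  have h2 : φ y = ∫ u in Set.Ioi y, stmt9ff u := hφ y
  rw [h1, h2, hsplit, intervalIntegral.integral_of_le hxy]
  ring

lemma stmt9phi_sub_pos (φ : ℝ → ℝ)
    (hφ : ∀ x : ℝ, φ x = ∫ u in Set.Ioi x, 1 / (u * Real.exp u))
    {x y : ℝ} (hx : 0 < x) (hxy : x < y) :
    0 < φ x - φ y := by
  rw [stmt9phi_sub φ hφ hx hxy.le]
  apply intervalIntegral.intervalIntegral_pos_of_pos_on
  · exact (stmt9ff_contOn.mono (by intro u hu; simp at hu ⊢; exact hx.trans_le hu.1)).intervalIntegrable_of_Icc hxy.le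
  · intro u hu; exact stmt9ff_pos (hx.trans hu.1)
  · exact hxy

lemma stmt9phi_deriv (φ : ℝ → ℝ)
    (hφ : ∀ x : ℝ, φ x = ∫ u in Set.Ioi x, 1 / (u * Real.exp u))
    {x : ℝ} (hx : 0 < x) :
    HasDerivAt φ (-stmt9ff x) x := by
  set c := x / 2 with hc
  have hc0 : 0 < c := by positivity
  have key : ∀ y : ℝ, 0 < y → φ y = φ c - ∫ u in c..y, stmt9ff u := by
    intro y hy
    rcases le_total c y with h | h
    · have := stmt9phi_sub φ hφ hc0 h; linarith
    · have := stmt9phi_sub φ hφ hy h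
      rw [intervalIntegral.integral_symm]; linarith
  have hFTC : HasDerivAt (fun y => ∫ u in c..y, stmt9ff u) (stmt9ff x) x := by
    apply intervalIntegral.integral_hasDerivAt_right
    · exact (stmt9ff_contOn.mono (by
        intro u hu
        simp only [Set.mem_Ioi]
        have := hu.1
        calc (0:ℝ) < c := hc0
          _ ≤ u := by
            rcases Set.mem_uIcc.1 hu with h | h
            · exact h.1
            · linarith [h.1, half_le_self hx.le])).intervalIntegrable
    · exact stmt9ff_contOn.stronglyMeasurableAtFilter isOpen_Ioi x hx
    · exact stmt9ff_contAt hx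
  have : HasDerivAt (fun y => φ c - ∫ u in c..y, stmt9ff u) (-stmt9ff x) x := by
    simpa using (hasDerivAt_const x (φ c)).fun_sub hFTC
  refine this.congr_of_eventuallyEq ?_
  filter_upwards [Ioi_mem_nhds hx] with y hy
  exact key y hy

lemma stmt9_final_pos {g σ t : ℝ} (hg : 0 < g) (hσ : 0 < σ) (ht : t < 0) :
    0 < (-(g + σ + t) * g ^ 2 - -(g + σ) * (2 * g ^ 1 * (g + σ))) / (g ^ 2) ^ 2 := by
  apply div_pos
  · nlinarith [mul_pos hg hσ, mul_pos hg (neg_pos.2 ht), sq_nonneg σ, mul_pos hg hg]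
  · positivity

theorem stmt_9 (δ : ℝ) (hδ : 0 < δ)
    (φ : ℝ → ℝ) (hφ : ∀ x : ℝ, φ x = ∫ u in Set.Ioi x, 1 / (u * Real.exp u))
    (q : ℝ → ℝ)
    (hq₁ : ∀ y : ℝ, max δ 1 ≤ y → q (1 + δ / y + Real.log y) = y)
    (hq₂ : ∀ z : ℝ, min (1 + δ) (2 + Real.log δ) ≤ z →
      max δ 1 ≤ q z ∧ 1 + δ / q z + Real.log (q z) = z)
    (Ψ : ℝ → ℝ)
    (hΨ : ∀ z : ℝ, Ψ z = Real.exp (-z) / (φ (z - Real.log (q z)) - φ z)) :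
    StrictConvexOn ℝ (Set.Ioi (min (1 + δ) (2 + Real.log δ))) Ψ := by
  rcases lt_or_ge δ 1 with hδ1 | hδ1
  · -- contradictory hypotheses when δ < 1
    exfalso
    have hlog : Real.log δ < δ - 1 := Real.log_lt_sub_one_of_pos hδ hδ1.ne
    have hmin : min (1 + δ) (2 + Real.log δ) = 2 + Real.log δ :=
      min_eq_right (by linarith)
    obtain ⟨h1, h2⟩ := hq₂ (min (1 + δ) (2 + Real.log δ)) le_rfl
    set y := q (min (1 + δ) (2 + Real.log δ)) with hy
    have hy1 : (1:ℝ) ≤ y := le_trans (le_max_right δ 1) h1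
    have hy0 : (0:ℝ) < y := by linarith
    have hlog2 : Real.log y⁻¹ ≤ y⁻¹ - 1 := Real.log_le_sub_one_of_pos (by positivity)
    rw [Real.log_inv] at hlog2
    have hyinv : y⁻¹ ≤ 1 := by
      rw [inv_le_one_iff₀]; right; exact hy1
    have : (1:ℝ) + δ ≤ 1 + δ / y + Real.log y := by
      have hdy : δ / y = δ * y⁻¹ := by ring
      nlinarith [mul_le_mul_of_nonneg_left hyinv (by linarith : (0:ℝ) ≤ 1 - δ)]
    rw [h2, hmin] at this
    linarith
  · -- main case δ ≥ 1
    have hlogδ : (0:ℝ) ≤ Real.log δ := Real.log_nonneg hδ1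
    have hmin : min (1 + δ) (2 + Real.log δ) = 2 + Real.log δ :=
      min_eq_right (by nlinarith [Real.log_le_sub_one_of_pos hδ])
    have hmax : max δ 1 = δ := max_eq_left hδ1
    rw [hmin] at hq₂ ⊢
    rw [hmax] at hq₁ hq₂
    set γ := 2 + Real.log δ with hγ
    have hγ2 : (2:ℝ) ≤ γ := by rw [hγ]; linarith
    set p : ℝ → ℝ := fun y => 1 + δ / y + Real.log y with hp
    have hp_mono : StrictMonoOn p (Set.Ici δ) := by
      intro y₁ h₁ y₂ h₂ h₁₂
      have h₁ : δ ≤ y₁ := h₁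
      have hy₁ : 0 < y₁ := lt_of_lt_of_le hδ h₁
      have hy₂ : 0 < y₂ := hy₁.trans h₁₂
      have hne : y₁ / y₂ ≠ 1 := by
        intro h; rw [div_eq_one_iff_eq hy₂.ne'] at h; exact (ne_of_lt h₁₂) h
      have hratio : Real.log (y₁ / y₂) < y₁ / y₂ - 1 :=
        Real.log_lt_sub_one_of_pos (by positivity) hne
      rw [Real.log_div hy₁.ne' hy₂.ne'] at hratio
      have key : δ / y₁ - δ / y₂ ≤ 1 - y₁ / y₂ := by
        rw [div_sub_div _ _ hy₁.ne' hy₂.ne',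
          show (1:ℝ) - y₁ / y₂ = (y₂ - y₁) / y₂ by field_simp,
          div_le_div_iff₀ (by positivity) hy₂]
        nlinarith [mul_nonneg (mul_pos (sub_pos.2 h₁₂) hy₂).le (sub_nonneg.2 h₁)]
      show 1 + δ / y₁ + Real.log y₁ < 1 + δ / y₂ + Real.log y₂
      linarith
    have hqmem : ∀ z : ℝ, γ ≤ z → δ ≤ q z ∧ p (q z) = z := fun z hz => hq₂ z hz
    have hq_gt : ∀ z : ℝ, γ < z → δ < q z := by
      intro z hz
      obtain ⟨h1, h2⟩ := hqmem z hz.le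
      rcases eq_or_lt_of_le h1 with he | h
      · exfalso
        have : p δ = γ := by
          show 1 + δ / δ + Real.log δ = γ
          rw [div_self hδ.ne']; rw [hγ]; ring
        rw [← he, this] at h2
        exact absurd h2 (ne_of_lt hz)
      · exact h
    have hq_cont : ∀ z : ℝ, γ < z → ContinuousAt q z := by
      intro z hz
      rw [ContinuousAt, tendsto_order]
      constructor
      · intro b hb
        have hc : max b δ < q z := max_lt hb (hq_gt z hz)
        have hcδ : δ ≤ max b δ := le_max_right _ _
        have hpc : p (max b δ) < z := by
          have := hp_mono hcδ (hqmem z hz.le).1 hc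
          rwa [(hqmem z hz.le).2] at this
        filter_upwards [Ioi_mem_nhds (max_lt hpc hz)] with w hw
        have hwγ : γ < w := (le_max_right _ _).trans_lt hw
        have hpw : p (max b δ) < p (q w) := by
          rw [(hqmem w hwγ.le).2]
          exact (le_max_left _ _).trans_lt hw
        have := (hp_mono.lt_iff_lt hcδ (hqmem w hwγ.le).1).1 hpw
        exact lt_of_le_of_lt (le_max_left b δ) this
      · intro b hb
        have hbδ : δ < b := (hq_gt z hz).trans hb
        have hzb : z < p b := by
          have := hp_mono (hqmem z hz.le).1 hbδ.le (by exact hb)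
          rwa [(hqmem z hz.le).2] at this
        filter_upwards [Ioo_mem_nhds hz hzb] with w hw
        have h2w := hqmem w hw.1.le
        have hpw : p (q w) < p b := by rw [h2w.2]; exact hw.2
        exact (hp_mono.lt_iff_lt h2w.1 hbδ.le).1 hpw
    have hp_deriv : ∀ y : ℝ, 0 < y → HasDerivAt p (-δ / y ^ 2 + 1 / y) y := by
      intro y hy
      have h1 : HasDerivAt (fun y : ℝ => 1 + δ / y) (δ * -(y ^ 2)⁻¹) y := by
        simpa [div_eq_mul_inv] using
          (hasDerivAt_const y (1:ℝ)).fun_add ((hasDerivAt_inv hy.ne').const_mul δ)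
      have h2 := h1.fun_add (Real.hasDerivAt_log hy.ne')
      convert h2 using 1
      · rfl
      · rfl
      field_simp
    have hq_deriv : ∀ z : ℝ, γ < z → HasDerivAt q ((q z) ^ 2 / (q z - δ)) z := by
      intro z hz
      have hQ := hq_gt z hz
      have hQ0 : 0 < q z := hδ.trans hQ
      have hval : -δ / (q z) ^ 2 + 1 / (q z) = (q z - δ) / (q z) ^ 2 := by
        field_simp; ring
      have hne : -δ / (q z) ^ 2 + 1 / (q z) ≠ 0 := by
        rw [hval]
        exact (div_pos (by linarith) (by positivity)).ne'
      have hev : ∀ᶠ w in 𝓝 z, p (q w) = w := by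
        filter_upwards [Ioi_mem_nhds hz] with w hw
        exact (hqmem w hw.le).2
      have := HasDerivAt.of_local_left_inverse (hq_cont z hz) (hp_deriv (q z) hQ0) hne hev
      rw [hval, inv_div] at this
      exact this
    set G : ℝ → ℝ := fun w => Real.exp w * (φ (w - Real.log (q w)) - φ w) with hGdef
    set sf : ℝ → ℝ := fun w => 1 / w + δ * (q w) ^ 2 / ((q w) ^ 2 - δ ^ 2) with hsfdef
    have hΨG : Ψ = fun w => (G w)⁻¹ := by
      funext w
      rw [hΨ w]
      show Real.exp (-w) / (φ (w - Real.log (q w)) - φ w)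
        = (Real.exp w * (φ (w - Real.log (q w)) - φ w))⁻¹
      rw [mul_inv, ← Real.exp_neg, div_eq_mul_inv]
    have master : ∀ z : ℝ, γ < z →
        0 < G z ∧ 0 < sf z ∧ HasDerivAt G (G z + sf z) z := by
      intro z hz
      have hz0 : (0:ℝ) < z := by linarith
      have hQδ : δ < q z := hq_gt z hz
      have hQ0 : (0:ℝ) < q z := hδ.trans hQδ
      have hQ1 : (1:ℝ) < q z := lt_of_le_of_lt hδ1 hQδ
      obtain ⟨-, hid⟩ := hqmem z hz.le
      have hid : 1 + δ / q z + Real.log (q z) = z := hid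
      have hA' : z - Real.log (q z) = 1 + δ / q z := by linarith
      have hA0 : 0 < z - Real.log (q z) := by rw [hA']; positivity
      have hAz : z - Real.log (q z) < z := by
        have := Real.log_pos hQ1; linarith
      have hDpos : 0 < φ (z - Real.log (q z)) - φ z := stmt9phi_sub_pos φ hφ hA0 hAz
      have hGpos : 0 < G z := mul_pos (Real.exp_pos z) hDpos
      have hQsq : δ ^ 2 < (q z) ^ 2 := by nlinarith
      have hsfpos : 0 < sf z := by
        have h1 : (0:ℝ) < 1 / z := by positivity
        have h2 : (0:ℝ) < δ * (q z) ^ 2 / ((q z) ^ 2 - δ ^ 2) :=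
          div_pos (by positivity) (by linarith)
        exact add_pos h1 h2
      refine ⟨hGpos, hsfpos, ?_⟩
      have hA : HasDerivAt (fun w => w - Real.log (q w))
          (1 - (q z)⁻¹ * ((q z) ^ 2 / (q z - δ))) z := by
        have hlog : HasDerivAt (fun w => Real.log (q w))
            ((q z)⁻¹ * ((q z) ^ 2 / (q z - δ))) z :=
          (Real.hasDerivAt_log hQ0.ne').comp z (hq_deriv z hz)
        simpa using (hasDerivAt_id z).fun_sub hlog
      have hφa : HasDerivAt (fun w => φ (w - Real.log (q w)))
          (-stmt9ff (z - Real.log (q z)) * (1 - (q z)⁻¹ * ((q z) ^ 2 / (q z - δ)))) z :=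
        (stmt9phi_deriv φ hφ hA0).comp z hA
      have hφz : HasDerivAt φ (-stmt9ff z) z := stmt9phi_deriv φ hφ hz0
      have hD : HasDerivAt (fun w => φ (w - Real.log (q w)) - φ w)
          (-stmt9ff (z - Real.log (q z)) * (1 - (q z)⁻¹ * ((q z) ^ 2 / (q z - δ)))
            - -stmt9ff z) z := hφa.sub hφz
      have hGd := (Real.hasDerivAt_exp z).fun_mul hD
      convert hGd using 1
      · rfl
      · rfl
      have hEA : Real.exp (z - Real.log (q z)) = Real.exp z / q z := by
        rw [Real.exp_sub, Real.exp_log hQ0]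
      show G z + sf z = _
      rw [hGdef, hsfdef]
      simp only [stmt9ff]
      rw [hEA, hA']
      have hQδ' : q z - δ ≠ 0 := by linarith
      have hQsq' : (q z) ^ 2 - δ ^ 2 ≠ 0 := by nlinarith
      have hB : (0:ℝ) < 1 + δ / q z := by positivity
      have hE0 : Real.exp z ≠ 0 := (Real.exp_pos z).ne'
      field_simp
      ring
    have sderiv : ∀ z : ℝ, γ < z → ∃ t : ℝ, t < 0 ∧ HasDerivAt sf t z := by
      intro z hz
      have hz0 : (0:ℝ) < z := by linarith
      have hQδ : δ < q z := hq_gt z hz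
      have hQ0 : (0:ℝ) < q z := hδ.trans hQδ
      have hQsq : (0:ℝ) < (q z) ^ 2 - δ ^ 2 := by nlinarith
      have h1 : HasDerivAt (fun w : ℝ => 1 / w) (-((z ^ 2)⁻¹)) z := by
        simpa [one_div] using hasDerivAt_inv hz0.ne'
      have hr : HasDerivAt (fun y : ℝ => δ * y ^ 2 / (y ^ 2 - δ ^ 2))
          ((δ * (2 * q z ^ 1) * ((q z) ^ 2 - δ ^ 2) - δ * (q z) ^ 2 * (2 * q z ^ 1))
            / ((q z) ^ 2 - δ ^ 2) ^ 2) (q z) :=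
        HasDerivAt.div ((hasDerivAt_pow 2 (q z)).const_mul δ)
          ((hasDerivAt_pow 2 (q z)).sub_const (δ ^ 2)) hQsq.ne'
      have h2 := hr.comp z (hq_deriv z hz)
      refine ⟨_, ?_, h1.add h2⟩
      have hnum : δ * (2 * q z ^ 1) * ((q z) ^ 2 - δ ^ 2) - δ * (q z) ^ 2 * (2 * q z ^ 1) < 0 := by
        have heq : δ * (2 * q z ^ 1) * ((q z) ^ 2 - δ ^ 2) - δ * (q z) ^ 2 * (2 * q z ^ 1)
            = -(2 * δ ^ 3 * q z) := by ring
        rw [heq]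
        have : (0:ℝ) < 2 * δ ^ 3 * q z := by positivity
        linarith
      have hr_neg : (δ * (2 * q z ^ 1) * ((q z) ^ 2 - δ ^ 2) - δ * (q z) ^ 2 * (2 * q z ^ 1))
          / ((q z) ^ 2 - δ ^ 2) ^ 2 < 0 := div_neg_of_neg_of_pos hnum (by positivity)
      have hq'pos : (0:ℝ) < (q z) ^ 2 / (q z - δ) := div_pos (by positivity) (by linarith)
      have : (0:ℝ) < (z ^ 2)⁻¹ := by positivity
      nlinarith [mul_neg_of_neg_of_pos hr_neg hq'pos]
    have hΨd : ∀ w : ℝ, γ < w → HasDerivAt Ψ (-(G w + sf w) / (G w) ^ 2) w := by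
      intro w hw
      obtain ⟨hGpos, _, hGd⟩ := master w hw
      rw [hΨG]
      exact hGd.inv hGpos.ne'
    apply strictConvexOn_of_deriv2_pos (convex_Ioi γ)
    · intro w hw
      exact ((hΨd w hw).continuousAt).continuousWithinAt
    · intro z hz
      rw [interior_Ioi] at hz
      obtain ⟨hGpos, hsfpos, hGd⟩ := master z hz
      obtain ⟨t, ht, hst⟩ := sderiv z hz
      have hnum : HasDerivAt (fun w => -(G w + sf w)) (-(G z + sf z + t)) z := by
        simpa using (hGd.fun_add hst).fun_neg
      have hden : HasDerivAt (fun w => (G w) ^ 2) (2 * G z ^ 1 * (G z + sf z)) z := hGd.pow 2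
      have hΨ1d : HasDerivAt (fun w => -(G w + sf w) / (G w) ^ 2)
          ((-(G z + sf z + t) * (G z) ^ 2 - -(G z + sf z) * (2 * G z ^ 1 * (G z + sf z)))
            / ((G z) ^ 2) ^ 2) z :=
        hnum.div hden (pow_ne_zero 2 hGpos.ne')
      have hev : deriv Ψ =ᶠ[𝓝 z] fun w => -(G w + sf w) / (G w) ^ 2 := by
        filter_upwards [Ioi_mem_nhds hz] with w hw
        exact (hΨd w hw).deriv
      have h2 : deriv^[2] Ψ z = deriv (deriv Ψ) z := by
        simp [Function.iterate_succ, Function.iterate_one]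
      rw [h2, hev.deriv_eq, hΨ1d.deriv]
      exact stmt9_final_pos hGpos hsfpos ht
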